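/- arXiv:1211.1419 — 5 statements merged into one kernel-verified Lean document; each statement's English description precedes it below -/
import Mathlib

section
/- Let V ⊂ ℝ² be open and suppose the restriction of F to V is a C¹ diffeomorphism onto an open set U ⊂ ℝ². Let m : ℝ → ℝ satisfy m' = α, and define Ψ : U → ℝ by Ψ(F(y₁, y₂)) = m(y₁) + y₂ for (y₁, y₂) ∈ V. Then ∇Ψ(F(y₁, y₂)) = (α(y₁), β(y₁)) for every (y₁, y₂) ∈ V; in particular |∇Ψ(x)| = 1 for every x ∈ U, and Ψ(x₁, 0) = m(x₁) whenever (x₁, 0) ∈ U with (x₁, 0) ∈ V. -/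
open Set

/-- The characteristic map `F(y₁, y₂) = (y₁ + y₂ α(y₁), y₂ β(y₁))` with
`β = √(1 - α²)`, used to integrate the eikonal equation `|∇Ψ| = 1` with
boundary data `Ψ(x₁, 0) = m(x₁)` by the method of characteristics. -/
noncomputable def Fchar (α : ℝ → ℝ) (y : ℝ × ℝ) : ℝ × ℝ :=
  (y.1 + y.2 * α y.1, y.2 * Real.sqrt (1 - α y.1 ^ 2))

/-- **Gradient of the eikonal solution along characteristics.**
If `F = Fchar α` restricted to an open set `V` is a `C¹` diffeomorphism onto an open
set `U` (with `C¹` inverse `G`), `m' = α`, and `Ψ` is defined on `U` by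
`Ψ(F(y₁, y₂)) = m(y₁) + y₂`, then `∇Ψ(F(y₁, y₂)) = (α(y₁), β(y₁))` on `V`;
in particular `|∇Ψ| = 1` on `U`, and `Ψ(x₁, 0) = m(x₁)` whenever `(x₁, 0) ∈ V`. -/
theorem eikonal_gradient_along_characteristics
    (α : ℝ → ℝ) (hα : ContDiff ℝ 1 α) (hα1 : ∀ s, |α s| < 1)
    (V U : Set (ℝ × ℝ)) (hV : IsOpen V) (hU : IsOpen U)
    (hFV : Fchar α '' V = U) (hFinj : InjOn (Fchar α) V)
    (G : ℝ × ℝ → ℝ × ℝ) (hG : ContDiffOn ℝ 1 G U)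
    (hGF : ∀ y ∈ V, G (Fchar α y) = y)
    (m : ℝ → ℝ) (hm : ∀ s, HasDerivAt m (α s) s)
    (Ψ : ℝ × ℝ → ℝ) (hΨ : ∀ y ∈ V, Ψ (Fchar α y) = m y.1 + y.2) :
    (∀ y ∈ V, HasFDerivAt Ψ
        ((α y.1) • ContinuousLinearMap.fst ℝ ℝ ℝ
          + (Real.sqrt (1 - α y.1 ^ 2)) • ContinuousLinearMap.snd ℝ ℝ ℝ) (Fchar α y))
    ∧ (∀ x ∈ U, (fderiv ℝ Ψ x (1, 0)) ^ 2 + (fderiv ℝ Ψ x (0, 1)) ^ 2 = 1)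
    ∧ (∀ x₁ : ℝ, ((x₁, (0 : ℝ)) ∈ V) → Ψ (x₁, 0) = m x₁) := by
  -- abbreviations
  have hαd : ∀ s, HasDerivAt α (deriv α s) s := fun s =>
    ((hα.differentiable one_ne_zero) s).hasDerivAt
  have hpos : ∀ s, 0 < 1 - α s ^ 2 := by
    intro s
    have h := hα1 s
    have h2 : α s ^ 2 < 1 := by
      have := sq_abs (α s)
      nlinarith [abs_nonneg (α s)]
    linarith
  have hβpos : ∀ s, 0 < Real.sqrt (1 - α s ^ 2) := fun s => Real.sqrt_pos.mpr (hpos s)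
  have hβsq : ∀ s, Real.sqrt (1 - α s ^ 2) ^ 2 = 1 - α s ^ 2 := fun s =>
    Real.sq_sqrt (hpos s).le
  have hβd : ∀ s, HasDerivAt (fun t => Real.sqrt (1 - α t ^ 2))
      (-(α s * deriv α s) / Real.sqrt (1 - α s ^ 2)) s := by
    intro s
    have h1 : HasDerivAt (fun t => 1 - α t ^ 2) (-(2 * α s * deriv α s)) s := by
      have := (hasDerivAt_const s (1 : ℝ)).sub ((hαd s).pow 2)
      refine this.congr_deriv ?_
      push_cast
      ring
    have h2 := (Real.hasDerivAt_sqrt (ne_of_gt (hpos s))).comp s h1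
    refine h2.congr_deriv ?_
    field_simp
  -- F ∘ G = id on U
  have hFG : ∀ x ∈ U, Fchar α (G x) = x := by
    intro x hx
    rw [← hFV] at hx
    obtain ⟨y, hy, rfl⟩ := hx
    rw [hGF y hy]
  -- Ψ = H ∘ G on U
  have hΨU : ∀ x ∈ U, Ψ x = m (G x).1 + (G x).2 := by
    intro x hx
    have hx' := hx
    rw [← hFV] at hx'
    obtain ⟨y, hy, rfl⟩ := hx'
    rw [hΨ y hy, hGF y hy]
  have main : ∀ y ∈ V, HasFDerivAt Ψ
      ((α y.1) • ContinuousLinearMap.fst ℝ ℝ ℝ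
        + (Real.sqrt (1 - α y.1 ^ 2)) • ContinuousLinearMap.snd ℝ ℝ ℝ) (Fchar α y) := by
    intro y hy
    set a := α y.1 with ha
    set a' := deriv α y.1 with ha'
    set b := Real.sqrt (1 - α y.1 ^ 2) with hb
    set L : ℝ × ℝ →L[ℝ] ℝ := a • ContinuousLinearMap.fst ℝ ℝ ℝ
        + b • ContinuousLinearMap.snd ℝ ℝ ℝ with hL
    -- derivative of F at y
    have hF1 : HasFDerivAt (fun z : ℝ × ℝ => z.1 + z.2 * α z.1)
        (ContinuousLinearMap.fst ℝ ℝ ℝ +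
          (y.2 • (a' • ContinuousLinearMap.fst ℝ ℝ ℝ)
            + a • ContinuousLinearMap.snd ℝ ℝ ℝ)) y :=
      (hasFDerivAt_fst).add
        ((hasFDerivAt_snd).mul ((hαd y.1).comp_hasFDerivAt y hasFDerivAt_fst))
    have hF2 : HasFDerivAt (fun z : ℝ × ℝ => z.2 * Real.sqrt (1 - α z.1 ^ 2))
        (y.2 • ((-(a * a') / b) • ContinuousLinearMap.fst ℝ ℝ ℝ)
          + b • ContinuousLinearMap.snd ℝ ℝ ℝ) y :=
      (hasFDerivAt_snd).mul ((hβd y.1).comp_hasFDerivAt y hasFDerivAt_fst)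
    set A : ℝ × ℝ →L[ℝ] ℝ × ℝ :=
      (ContinuousLinearMap.fst ℝ ℝ ℝ +
          (y.2 • (a' • ContinuousLinearMap.fst ℝ ℝ ℝ)
            + a • ContinuousLinearMap.snd ℝ ℝ ℝ)).prod
        (y.2 • ((-(a * a') / b) • ContinuousLinearMap.fst ℝ ℝ ℝ)
          + b • ContinuousLinearMap.snd ℝ ℝ ℝ) with hA
    have hFd : HasFDerivAt (Fchar α) A y := hF1.prodMk hF2
    have hxU : Fchar α y ∈ U := by rw [← hFV]; exact mem_image_of_mem _ hy
    set B := fderiv ℝ G (Fchar α y) with hBdef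
    have hB : HasFDerivAt G B (Fchar α y) :=
      (((hG.differentiableOn one_ne_zero) _ hxU).differentiableAt
        (hU.mem_nhds hxU)).hasFDerivAt
    -- A ∘ B = id
    have hFd' : HasFDerivAt (Fchar α) A (G (Fchar α y)) := by
      rw [hGF y hy]; exact hFd
    have hcomp2 : HasFDerivAt (Fchar α ∘ G) (A.comp B) (Fchar α y) :=
      hFd'.comp (Fchar α y) hB
    have hid2 : HasFDerivAt (fun x : ℝ × ℝ => x) (A.comp B) (Fchar α y) := by
      apply hcomp2.congr_of_eventuallyEq
      filter_upwards [hU.mem_nhds hxU] with x hx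
      exact (hFG x hx).symm
    have hAB : A.comp B = ContinuousLinearMap.id ℝ (ℝ × ℝ) :=
      hid2.unique (hasFDerivAt_id _)
    -- derivative of H = fun p => m p.1 + p.2 at G (F y) = y
    set C : ℝ × ℝ →L[ℝ] ℝ := a • ContinuousLinearMap.fst ℝ ℝ ℝ
        + ContinuousLinearMap.snd ℝ ℝ ℝ with hC
    have hH : HasFDerivAt (fun p : ℝ × ℝ => m p.1 + p.2) C (G (Fchar α y)) := by
      rw [hGF y hy]
      exact ((hm y.1).comp_hasFDerivAt y hasFDerivAt_fst).add hasFDerivAt_snd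
    have hΨd : HasFDerivAt Ψ (C.comp B) (Fchar α y) := by
      apply (hH.comp (Fchar α y) hB).congr_of_eventuallyEq
      filter_upwards [hU.mem_nhds hxU] with x hx
      exact hΨU x hx
    -- L ∘ A = C
    have hLA : L.comp A = C := by
      apply ContinuousLinearMap.ext
      intro v
      simp only [hL, hA, hC, ContinuousLinearMap.comp_apply,
        ContinuousLinearMap.add_apply, ContinuousLinearMap.smul_apply,
        ContinuousLinearMap.prod_apply, ContinuousLinearMap.coe_fst',
        ContinuousLinearMap.coe_snd', smul_eq_mul]
      have hbne : b ≠ 0 := (hβpos y.1).ne'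
      have hb2 : b ^ 2 = 1 - a ^ 2 := hβsq y.1
      field_simp
      linear_combination v.2 * hb2
    have hfinal : C.comp B = L := by
      calc C.comp B = (L.comp A).comp B := by rw [hLA]
        _ = L.comp (A.comp B) := by rw [ContinuousLinearMap.comp_assoc]
        _ = L := by rw [hAB, ContinuousLinearMap.comp_id]
    rw [← hfinal]
    exact hΨd
  refine ⟨main, ?_, ?_⟩
  · intro x hx
    rw [← hFV] at hx
    obtain ⟨y, hy, rfl⟩ := hx
    have h := (main y hy).fderiv
    rw [h]
    simp only [ContinuousLinearMap.add_apply, ContinuousLinearMap.smul_apply,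
      ContinuousLinearMap.coe_fst', ContinuousLinearMap.coe_snd', smul_eq_mul]
    simp only [mul_one, mul_zero, add_zero, zero_add]
    rw [hβsq y.1]
    ring
  · intro x₁ h
    have := hΨ (x₁, 0) h
    simpa [Fchar] using this
end

section
/- For every K > 0 there exists ε > 0 with the following property: for every α : ℝ → ℝ of class C² with support contained in (−1, 1), α(0) = 0, and sup(|α| + |α'| + |α''|) ≤ ε, there exists δ > 0 such that the restriction of F to the open rectangle (−δ, δ) × (−δ, K + δ) is injective and has invertible derivative at every point; consequently F restricts to a C¹ diffeomorphism from this rectangle onto an open subset of ℝ² containing the segment {0} × [0, K]. -/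
open Set

open ContinuousLinearMap
open scoped NNReal

noncomputable def Lmap (a b c d : ℝ) : ℝ × ℝ →L[ℝ] ℝ × ℝ :=
  (a • fst ℝ ℝ ℝ + b • snd ℝ ℝ ℝ).prod (c • fst ℝ ℝ ℝ + d • snd ℝ ℝ ℝ)

lemma Lmap_apply (a b c d : ℝ) (h : ℝ × ℝ) :
    Lmap a b c d h = (a * h.1 + b * h.2, c * h.1 + d * h.2) := rfl

lemma Lmap_opNorm_le {a b c d m : ℝ} (hm : 0 ≤ m) (h1 : |a| + |b| ≤ m)
    (h2 : |c| + |d| ≤ m) : ‖Lmap a b c d‖ ≤ m := by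
  refine ContinuousLinearMap.opNorm_le_bound _ hm fun h => ?_
  rw [Lmap_apply]
  have k1 : |h.1| ≤ ‖h‖ := norm_fst_le h
  have k2 : |h.2| ≤ ‖h‖ := norm_snd_le h
  have hn : 0 ≤ ‖h‖ := norm_nonneg h
  rw [Prod.norm_def]
  apply max_le
  · calc ‖a * h.1 + b * h.2‖ ≤ |a * h.1| + |b * h.2| := abs_add_le _ _
      _ = |a| * |h.1| + |b| * |h.2| := by rw [abs_mul, abs_mul]
      _ ≤ m * ‖h‖ := by nlinarith [abs_nonneg a, abs_nonneg b, abs_nonneg h.1, abs_nonneg h.2]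
  · calc ‖c * h.1 + d * h.2‖ ≤ |c * h.1| + |d * h.2| := abs_add_le _ _
      _ = |c| * |h.1| + |d| * |h.2| := by rw [abs_mul, abs_mul]
      _ ≤ m * ‖h‖ := by nlinarith [abs_nonneg c, abs_nonneg d, abs_nonneg h.1, abs_nonneg h.2]

lemma Lmap_sub_id (a b c d : ℝ) :
    Lmap a b c d - ContinuousLinearMap.id ℝ (ℝ × ℝ) = Lmap (a - 1) b c (d - 1) := by
  refine ContinuousLinearMap.ext fun h => ?_
  simp only [ContinuousLinearMap.sub_apply, ContinuousLinearMap.id_apply, Lmap_apply]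
  rw [Prod.ext_iff]
  constructor <;> simp <;> ring

lemma Lmap_id_add (a b c d : ℝ) :
    ContinuousLinearMap.id ℝ (ℝ × ℝ) + Lmap a b c d = Lmap (1 + a) b c (1 + d) := by
  refine ContinuousLinearMap.ext fun h => ?_
  simp only [ContinuousLinearMap.add_apply, ContinuousLinearMap.id_apply, Lmap_apply]
  rw [Prod.ext_iff]
  constructor <;> simp <;> ring

lemma hasFDerivAt_Fchar {α : ℝ → ℝ} (hα : ContDiff ℝ 2 α)
    (hb : ∀ t : ℝ, 1 - α t ^ 2 ≠ 0) (y : ℝ × ℝ) :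
    HasFDerivAt (Fchar α)
      (Lmap (1 + y.2 * deriv α y.1) (α y.1)
        (y.2 * ((2 * α y.1 ^ 1 * deriv α y.1 * -1) / (2 * Real.sqrt (1 - α y.1 ^ 2))))
        (Real.sqrt (1 - α y.1 ^ 2))) y := by
  have hd : ∀ t : ℝ, HasDerivAt α (deriv α t) t := fun t =>
    ((hα.differentiable (by norm_num)) t).hasDerivAt
  have hu : HasDerivAt (fun t => 1 - α t ^ 2) (2 * α y.1 ^ 1 * deriv α y.1 * -1) y.1 := by
    simpa using (((hd y.1).pow 2).const_sub 1)
  have hg : HasDerivAt (fun t => Real.sqrt (1 - α t ^ 2))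
      ((2 * α y.1 ^ 1 * deriv α y.1 * -1) / (2 * Real.sqrt (1 - α y.1 ^ 2))) y.1 :=
    hu.sqrt (hb y.1)
  have h1 : HasFDerivAt (fun y : ℝ × ℝ => y.1 + y.2 * α y.1)
      (fst ℝ ℝ ℝ + ((y.2 • (deriv α y.1 • fst ℝ ℝ ℝ)) + α y.1 • snd ℝ ℝ ℝ)) y :=
    (hasFDerivAt_fst).add
      ((hasFDerivAt_snd).mul ((hd y.1).comp_hasFDerivAt y hasFDerivAt_fst))
  have h2 : HasFDerivAt (fun y : ℝ × ℝ => y.2 * Real.sqrt (1 - α y.1 ^ 2))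
      ((y.2 • (((2 * α y.1 ^ 1 * deriv α y.1 * -1) / (2 * Real.sqrt (1 - α y.1 ^ 2))) • fst ℝ ℝ ℝ))
        + Real.sqrt (1 - α y.1 ^ 2) • snd ℝ ℝ ℝ) y :=
    (hasFDerivAt_snd).mul (hg.comp_hasFDerivAt y hasFDerivAt_fst)
  have h3 := h1.prodMk h2
  have heq : ((fst ℝ ℝ ℝ + ((y.2 • (deriv α y.1 • fst ℝ ℝ ℝ)) + α y.1 • snd ℝ ℝ ℝ)).prod
      ((y.2 • (((2 * α y.1 ^ 1 * deriv α y.1 * -1) / (2 * Real.sqrt (1 - α y.1 ^ 2))) • fst ℝ ℝ ℝ))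
        + Real.sqrt (1 - α y.1 ^ 2) • snd ℝ ℝ ℝ))
      = Lmap (1 + y.2 * deriv α y.1) (α y.1)
        (y.2 * ((2 * α y.1 ^ 1 * deriv α y.1 * -1) / (2 * Real.sqrt (1 - α y.1 ^ 2))))
        (Real.sqrt (1 - α y.1 ^ 2)) := by
    refine ContinuousLinearMap.ext fun h => ?_
    simp only [Lmap_apply, ContinuousLinearMap.prod_apply, ContinuousLinearMap.add_apply,
      ContinuousLinearMap.smul_apply, ContinuousLinearMap.coe_fst', ContinuousLinearMap.coe_snd',
      smul_eq_mul, Prod.mk.injEq]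
    constructor <;> ring
  exact heq ▸ h3


set_option maxHeartbeats 1000000 in
/-- **Local diffeomorphism property of the characteristic map.**
For every `K > 0` there is `ε > 0` such that for every `C²` function `α` supported in
`(-1, 1)` with `α(0) = 0` and `sup(|α| + |α'| + |α''|) ≤ ε`, there is `δ > 0` such that
`F = Fchar α` is injective with invertible derivative on the open rectangle
`(-δ, δ) × (-δ, K + δ)`; consequently `F` restricts to a `C¹` diffeomorphism from this
rectangle onto an open set containing the segment `{0} × [0, K]`. -/
theorem Fchar_local_diffeomorphism :
    ∀ K : ℝ, 0 < K → ∃ ε > (0 : ℝ), ∀ α : ℝ → ℝ,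
      ContDiff ℝ 2 α → Function.support α ⊆ Ioo (-1 : ℝ) 1 → α 0 = 0 →
      (∀ s : ℝ, |α s| + |deriv α s| + |deriv (deriv α) s| ≤ ε) →
      ∃ δ > (0 : ℝ),
        InjOn (Fchar α) (Ioo (-δ) δ ×ˢ Ioo (-δ) (K + δ))
        ∧ (∀ y ∈ Ioo (-δ) δ ×ˢ Ioo (-δ) (K + δ),
            ∃ A : (ℝ × ℝ) ≃L[ℝ] ℝ × ℝ,
              HasFDerivAt (Fchar α) (A : (ℝ × ℝ) →L[ℝ] ℝ × ℝ) y)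
        ∧ IsOpen (Fchar α '' (Ioo (-δ) δ ×ˢ Ioo (-δ) (K + δ)))
        ∧ ({(0 : ℝ)} : Set ℝ) ×ˢ Icc (0 : ℝ) K ⊆ Fchar α '' (Ioo (-δ) δ ×ˢ Ioo (-δ) (K + δ))
        ∧ ∃ G : ℝ × ℝ → ℝ × ℝ,
            ContDiffOn ℝ 1 G (Fchar α '' (Ioo (-δ) δ ×ˢ Ioo (-δ) (K + δ)))
            ∧ ∀ y ∈ Ioo (-δ) δ ×ˢ Ioo (-δ) (K + δ), G (Fchar α y) = y := by
  intro K hK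
  have hKpos2 : (0:ℝ) < 8 * (K + 2) := by nlinarith
  refine ⟨min (1/2) (1/(8*(K+2))), lt_min (by norm_num) (div_pos one_pos hKpos2), ?_⟩
  intro α hα hsupp hα0 hsup
  set ε : ℝ := min (1/2) (1/(8*(K+2))) with hεdef
  have hεpos : 0 < ε := lt_min (by norm_num) (div_pos one_pos hKpos2)
  have hε2 : ε ≤ 1/2 := min_le_left _ _
  have hK2 : (K + 2) * ε ≤ 1/8 := by
    have h : ε ≤ 1/(8*(K+2)) := min_le_right _ _
    rw [le_div_iff₀ hKpos2] at h
    nlinarith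
  have habs : ∀ t : ℝ, |α t| ≤ ε ∧ |deriv α t| ≤ ε := fun t => by
    have h := hsup t
    have h1 := abs_nonneg (α t); have h2 := abs_nonneg (deriv α t)
    have h3 := abs_nonneg (deriv (deriv α) t)
    exact ⟨by linarith, by linarith⟩
  have hsq : ∀ t : ℝ, α t ^ 2 ≤ ε ^ 2 := fun t => by
    have h := (habs t).1
    nlinarith [sq_abs (α t), abs_nonneg (α t)]
  have hεsq : ε ^ 2 ≤ 1/4 := by nlinarith
  have hpos1 : ∀ t : ℝ, (0:ℝ) < 1 - α t ^ 2 := fun t => by nlinarith [hsq t]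
  have hb : ∀ t : ℝ, 1 - α t ^ 2 ≠ 0 := fun t => ne_of_gt (hpos1 t)
  have hg_nonneg : ∀ t : ℝ, 0 ≤ Real.sqrt (1 - α t ^ 2) := fun t => Real.sqrt_nonneg _
  have hg_sq : ∀ t : ℝ, Real.sqrt (1 - α t ^ 2) ^ 2 = 1 - α t ^ 2 := fun t =>
    Real.sq_sqrt (hpos1 t).le
  have hg_ub : ∀ t : ℝ, Real.sqrt (1 - α t ^ 2) ≤ 1 := fun t =>
    Real.sqrt_le_one.mpr (by nlinarith [hsq t])
  have hg_lb : ∀ t : ℝ, (1/2 : ℝ) ≤ Real.sqrt (1 - α t ^ 2) := fun t => by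
    nlinarith [hg_sq t, hg_nonneg t, hsq t, hεsq]
  set s : Set (ℝ × ℝ) := Ioo (-(1:ℝ)) 1 ×ˢ Ioo (-(1:ℝ)) (K + 1) with hsdef
  have hFd : ∀ y : ℝ × ℝ, HasFDerivAt (Fchar α)
      (Lmap (1 + y.2 * deriv α y.1) (α y.1)
        (y.2 * ((2 * α y.1 ^ 1 * deriv α y.1 * -1) / (2 * Real.sqrt (1 - α y.1 ^ 2))))
        (Real.sqrt (1 - α y.1 ^ 2))) y := hasFDerivAt_Fchar hα hb
  have hMle : ∀ y ∈ s, ‖Lmap (y.2 * deriv α y.1) (α y.1)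
      (y.2 * ((2 * α y.1 ^ 1 * deriv α y.1 * -1) / (2 * Real.sqrt (1 - α y.1 ^ 2))))
      (Real.sqrt (1 - α y.1 ^ 2) - 1)‖ ≤ (1:ℝ)/2 := by
    intro y hy
    obtain ⟨hy1, hy2⟩ := hy
    have hq : |y.2| ≤ K + 1 := by
      rw [abs_le]
      exact ⟨by nlinarith [hy2.1], le_of_lt hy2.2⟩
    have ha1 : |α y.1| ≤ ε := (habs y.1).1
    have ha2 : |deriv α y.1| ≤ ε := (habs y.1).2
    apply Lmap_opNorm_le (by norm_num)
    · rw [abs_mul]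
      have h1 : |y.2| * |deriv α y.1| ≤ (K+1) * ε :=
        mul_le_mul hq ha2 (abs_nonneg _) (by linarith)
      nlinarith
    · have hgl := hg_lb y.1
      have hnum : |2 * α y.1 ^ 1 * deriv α y.1 * -1| ≤ 2 * ε^2 := by
        rw [pow_one, abs_mul, abs_mul, abs_mul, abs_neg, abs_one, mul_one, abs_two]
        nlinarith [abs_nonneg (α y.1), abs_nonneg (deriv α y.1)]
      have hfrac : |(2 * α y.1 ^ 1 * deriv α y.1 * -1) / (2 * Real.sqrt (1 - α y.1 ^ 2))|
          ≤ 2 * ε ^ 2 := by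
        rw [abs_div]
        have hden : (1:ℝ) ≤ |2 * Real.sqrt (1 - α y.1 ^ 2)| := by
          rw [abs_of_nonneg (by linarith)]; linarith
        calc |2 * α y.1 ^ 1 * deriv α y.1 * -1| / |2 * Real.sqrt (1 - α y.1 ^ 2)|
            ≤ |2 * α y.1 ^ 1 * deriv α y.1 * -1| := div_le_self (abs_nonneg _) hden
          _ ≤ 2 * ε ^ 2 := hnum
      have h3 : |y.2 * ((2 * α y.1 ^ 1 * deriv α y.1 * -1) /
          (2 * Real.sqrt (1 - α y.1 ^ 2)))| ≤ (K+1) * (2 * ε^2) := by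
        rw [abs_mul]
        exact mul_le_mul hq hfrac (abs_nonneg _) (by linarith)
      have h4 : |Real.sqrt (1 - α y.1 ^ 2) - 1| ≤ ε ^ 2 := by
        rw [abs_le]
        constructor
        · nlinarith [hg_sq y.1, hsq y.1, hg_nonneg y.1, hg_ub y.1]
        · nlinarith [hg_ub y.1, sq_nonneg ε]
      nlinarith [mul_le_mul_of_nonneg_right hK2 hεpos.le, hεpos, hε2]
  have hMfd : ∀ y : ℝ × ℝ, HasFDerivAt (fun z => Fchar α z - z)
      (Lmap (y.2 * deriv α y.1) (α y.1)
        (y.2 * ((2 * α y.1 ^ 1 * deriv α y.1 * -1) / (2 * Real.sqrt (1 - α y.1 ^ 2))))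
        (Real.sqrt (1 - α y.1 ^ 2) - 1)) y := by
    intro y
    have h := (hFd y).sub (hasFDerivAt_id y)
    have h2 : Lmap (1 + y.2 * deriv α y.1) (α y.1)
        (y.2 * ((2 * α y.1 ^ 1 * deriv α y.1 * -1) / (2 * Real.sqrt (1 - α y.1 ^ 2))))
        (Real.sqrt (1 - α y.1 ^ 2)) - ContinuousLinearMap.id ℝ (ℝ × ℝ)
        = Lmap (y.2 * deriv α y.1) (α y.1)
        (y.2 * ((2 * α y.1 ^ 1 * deriv α y.1 * -1) / (2 * Real.sqrt (1 - α y.1 ^ 2))))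
        (Real.sqrt (1 - α y.1 ^ 2) - 1) := by
      rw [Lmap_sub_id]
      have h1 : 1 + y.2 * deriv α y.1 - 1 = y.2 * deriv α y.1 := by ring
      rw [h1]
    exact h2 ▸ h
  have hconv : Convex ℝ s := (convex_Ioo _ _).prod (convex_Ioo _ _)
  have hMfdW : ∀ y ∈ s, HasFDerivWithinAt (fun z => Fchar α z - z)
      (Lmap (y.2 * deriv α y.1) (α y.1)
        (y.2 * ((2 * α y.1 ^ 1 * deriv α y.1 * -1) / (2 * Real.sqrt (1 - α y.1 ^ 2))))
        (Real.sqrt (1 - α y.1 ^ 2) - 1)) s y := fun y _ => (hMfd y).hasFDerivWithinAt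
  have hbound : ∀ y ∈ s, ‖Lmap (y.2 * deriv α y.1) (α y.1)
      (y.2 * ((2 * α y.1 ^ 1 * deriv α y.1 * -1) / (2 * Real.sqrt (1 - α y.1 ^ 2))))
      (Real.sqrt (1 - α y.1 ^ 2) - 1)‖₊ ≤ (1/2 : ℝ≥0) := by
    intro y hy
    rw [← NNReal.coe_le_coe, coe_nnnorm]
    push_cast
    exact hMle y hy
  have hLip : LipschitzOnWith (1/2 : ℝ≥0) (fun z => Fchar α z - z) s :=
    hconv.lipschitzOnWith_of_nnnorm_hasFDerivWithin_le hMfdW hbound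
  have hAppr : ApproximatesLinearOn (Fchar α)
      ((ContinuousLinearEquiv.refl ℝ (ℝ × ℝ)) : (ℝ × ℝ) →L[ℝ] ℝ × ℝ) s (1/2) := by
    apply LipschitzOnWith.approximatesLinearOn
    have heq : (Fchar α - ⇑((ContinuousLinearEquiv.refl ℝ (ℝ × ℝ)) : (ℝ × ℝ) →L[ℝ] ℝ × ℝ))
        = fun z => Fchar α z - z := by
      funext z
      simp [ContinuousLinearEquiv.coe_refl']
    rw [heq]
    exact hLip
  have hcN : Subsingleton (ℝ × ℝ) ∨ (1/2 : ℝ≥0) <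
      ‖(((ContinuousLinearEquiv.refl ℝ (ℝ × ℝ)).symm : (ℝ × ℝ) ≃L[ℝ] ℝ × ℝ) :
        (ℝ × ℝ) →L[ℝ] ℝ × ℝ)‖₊⁻¹ := by
    right
    simp only [ContinuousLinearEquiv.refl_symm, ContinuousLinearEquiv.coe_refl,
      ContinuousLinearMap.nnnorm_id, inv_one]
    rw [← NNReal.coe_lt_coe]
    norm_num
  have hsopen : IsOpen s := IsOpen.prod isOpen_Ioo isOpen_Ioo
  obtain ⟨e, hecoe, hesrc, hetgt⟩ :
      ∃ e : OpenPartialHomeomorph (ℝ × ℝ) (ℝ × ℝ),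
        ⇑e = Fchar α ∧ e.source = s ∧ e.target = Fchar α '' s :=
    ⟨hAppr.toOpenPartialHomeomorph (Fchar α) s hcN hsopen, rfl, rfl, rfl⟩
  have hinv : ∀ y ∈ s, ∃ A : (ℝ × ℝ) ≃L[ℝ] ℝ × ℝ,
      (A : (ℝ × ℝ) →L[ℝ] ℝ × ℝ) = Lmap (1 + y.2 * deriv α y.1) (α y.1)
        (y.2 * ((2 * α y.1 ^ 1 * deriv α y.1 * -1) / (2 * Real.sqrt (1 - α y.1 ^ 2))))
        (Real.sqrt (1 - α y.1 ^ 2)) := by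
    intro y hy
    set T : (ℝ × ℝ) →L[ℝ] ℝ × ℝ := Lmap (y.2 * deriv α y.1) (α y.1)
        (y.2 * ((2 * α y.1 ^ 1 * deriv α y.1 * -1) / (2 * Real.sqrt (1 - α y.1 ^ 2))))
        (Real.sqrt (1 - α y.1 ^ 2) - 1) with hTdef
    have hnorm : ‖-T‖ < 1 := by
      rw [norm_neg]
      linarith [hMle y hy]
    refine ⟨ContinuousLinearEquiv.unitsEquiv ℝ (ℝ × ℝ) (Units.oneSub (-T) hnorm), ?_⟩
    have hval : ((Units.oneSub (-T) hnorm : ((ℝ × ℝ) →L[ℝ] ℝ × ℝ)ˣ) :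
        (ℝ × ℝ) →L[ℝ] ℝ × ℝ) = Lmap (1 + y.2 * deriv α y.1) (α y.1)
        (y.2 * ((2 * α y.1 ^ 1 * deriv α y.1 * -1) / (2 * Real.sqrt (1 - α y.1 ^ 2))))
        (Real.sqrt (1 - α y.1 ^ 2)) := by
      rw [Units.val_oneSub, sub_neg_eq_add, ContinuousLinearMap.one_def, hTdef, Lmap_id_add]
      have harg : (1 : ℝ) + (Real.sqrt (1 - α y.1 ^ 2) - 1) = Real.sqrt (1 - α y.1 ^ 2) := by
        ring
      rw [harg]
    refine ContinuousLinearMap.ext fun x => ?_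
    rw [ContinuousLinearEquiv.coe_coe, ContinuousLinearEquiv.unitsEquiv_apply, hval]
  have hα1 : ContDiff ℝ 1 α := hα.of_le (by norm_num)
  have hFc : ∀ y : ℝ × ℝ, ContDiffAt ℝ 1 (Fchar α) y := by
    intro y
    have c1 : ContDiffAt ℝ 1 (fun z : ℝ × ℝ => z.1 + z.2 * α z.1) y :=
      (contDiff_fst.contDiffAt).add
        ((contDiff_snd.contDiffAt).mul ((hα1.contDiffAt).comp y (contDiff_fst.contDiffAt)))
    have cg : ContDiffAt ℝ 1 (fun t : ℝ => Real.sqrt (1 - α t ^ 2)) y.1 :=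
      ContDiffAt.sqrt (f := fun t : ℝ => 1 - α t ^ 2)
        ((contDiffAt_const (c := (1:ℝ))).sub ((hα1.contDiffAt).pow 2)) (hb y.1)
    have c2 : ContDiffAt ℝ 1 (fun z : ℝ × ℝ => z.2 * Real.sqrt (1 - α z.1 ^ 2)) y :=
      (contDiff_snd.contDiffAt).mul (cg.comp y (contDiff_fst.contDiffAt))
    exact c1.prodMk c2
  have hderiv : ∀ y ∈ s, ∃ A : (ℝ × ℝ) ≃L[ℝ] ℝ × ℝ,
      HasFDerivAt (Fchar α) (A : (ℝ × ℝ) →L[ℝ] ℝ × ℝ) y := by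
    intro y hy
    obtain ⟨A, hA⟩ := hinv y hy
    exact ⟨A, by rw [hA]; exact hFd y⟩
  have hopen : IsOpen (Fchar α '' s) := by
    have h := e.open_target
    rwa [hetgt] at h
  have hseg : ({(0 : ℝ)} : Set ℝ) ×ˢ Icc (0 : ℝ) K ⊆ Fchar α '' s := by
    intro z hz
    rw [mem_prod] at hz
    have hz1 : z.1 = 0 := hz.1
    obtain ⟨hz2a, hz2b⟩ := hz.2
    refine ⟨(0, z.2), ⟨⟨by norm_num, by norm_num⟩, ⟨by linarith, by linarith⟩⟩, ?_⟩
    show Fchar α (0, z.2) = z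
    simp only [Fchar, hα0]
    norm_num
    exact Prod.ext hz1.symm rfl
  have hGsmooth : ContDiffOn ℝ 1 (⇑e.symm) (Fchar α '' s) := by
    intro z hz
    have hzt : z ∈ e.target := by rw [hetgt]; exact hz
    have hys : e.symm z ∈ s := by
      have h := e.map_target hzt
      rwa [hesrc] at h
    obtain ⟨A, hA⟩ := hinv _ hys
    have hFd' : HasFDerivAt (⇑e) (A : (ℝ × ℝ) →L[ℝ] ℝ × ℝ) (e.symm z) := by
      rw [hecoe, hA]; exact hFd _
    have hFc' : ContDiffAt ℝ 1 (⇑e) (e.symm z) := by rw [hecoe]; exact hFc _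
    exact (e.contDiffAt_symm hzt hFd' hFc').contDiffWithinAt
  have hGinv : ∀ y ∈ s, e.symm (Fchar α y) = y := by
    intro y hy
    have h := e.left_inv (by rw [hesrc]; exact hy)
    rwa [hecoe] at h
  exact ⟨1, one_pos, hAppr.injOn hcN, hderiv, hopen, hseg, ⇑e.symm, hGsmooth, hGinv⟩
end

section
/- Assume in addition that α is of class C², α(0) = 0, and that for some K > 0 the restriction of F to an open set V containing the segment {0} × [0, K] is a C² diffeomorphism onto an open set U ⊂ ℝ². Let m : ℝ → ℝ satisfy m' = α, and define Ψ : U → ℝ by Ψ(F(y₁, y₂)) = m(y₁) + y₂. Then 1 + x₂ α'(0) > 0 for all x₂ ∈ [0, K], and the two-dimensional Laplacian of Ψ satisfies ΔΨ(0, x₂) = α'(0) / (1 + x₂ α'(0)) for every x₂ ∈ [0, K]. -/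
open Set

/-- The two-dimensional Laplacian of `f : ℝ² → ℝ`, written via iterated Fréchet
derivatives in the coordinate directions. -/
noncomputable def lap2 (f : ℝ × ℝ → ℝ) (x : ℝ × ℝ) : ℝ :=
    fderiv ℝ (fun y => fderiv ℝ f y (1, 0)) x (1, 0)
  + fderiv ℝ (fun y => fderiv ℝ f y (0, 1)) x (0, 1)

/-- The gradient-type continuous linear map `(v₁, v₂) ↦ a v₁ + b v₂`. -/
noncomputable def gradCLM (a b : ℝ) : ℝ × ℝ →L[ℝ] ℝ :=
  a • ContinuousLinearMap.fst ℝ ℝ ℝ + b • ContinuousLinearMap.snd ℝ ℝ ℝ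

@[simp] lemma gradCLM_apply (a b : ℝ) (v : ℝ × ℝ) :
    gradCLM a b v = a * v.1 + b * v.2 := by
  simp [gradCLM, smul_eq_mul]

noncomputable def betaF (α : ℝ → ℝ) (s : ℝ) : ℝ := Real.sqrt (1 - α s ^ 2)

noncomputable def betaD (α : ℝ → ℝ) (s : ℝ) : ℝ :=
  -(2 * α s * deriv α s) / (2 * betaF α s)

/-- The Fréchet derivative of `Fchar α`. -/
noncomputable def Mchar (α : ℝ → ℝ) (y : ℝ × ℝ) : ℝ × ℝ →L[ℝ] ℝ × ℝ :=
  (gradCLM (1 + y.2 * deriv α y.1) (α y.1)).prod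
    (gradCLM (y.2 * betaD α y.1) (betaF α y.1))

@[simp] lemma Mchar_apply (α : ℝ → ℝ) (y v : ℝ × ℝ) :
    Mchar α y v = ((1 + y.2 * deriv α y.1) * v.1 + α y.1 * v.2,
      y.2 * betaD α y.1 * v.1 + betaF α y.1 * v.2) := by
  simp [Mchar]

lemma hasFDerivAt_Fchar_s6 (α : ℝ → ℝ) (y : ℝ × ℝ)
    (ha : HasDerivAt α (deriv α y.1) y.1)
    (hb : HasDerivAt (betaF α) (betaD α y.1) y.1) :
    HasFDerivAt (Fchar α) (Mchar α y) y := by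
  have hA : HasFDerivAt (fun y : ℝ × ℝ => α y.1)
      (deriv α y.1 • ContinuousLinearMap.fst ℝ ℝ ℝ) y :=
    ha.comp_hasFDerivAt y hasFDerivAt_fst
  have hB : HasFDerivAt (fun y : ℝ × ℝ => betaF α y.1)
      (betaD α y.1 • ContinuousLinearMap.fst ℝ ℝ ℝ) y :=
    hb.comp_hasFDerivAt y hasFDerivAt_fst
  have h1 := hasFDerivAt_fst.add ((hasFDerivAt_snd (p := y)).mul hA)
  have h2 := (hasFDerivAt_snd (p := y)).mul hB
  have h := h1.prodMk h2
  have hEq : Fchar α = fun y : ℝ × ℝ => (y.1 + y.2 * α y.1, y.2 * betaF α y.1) := rfl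
  rw [hEq]
  refine h.congr_fderiv ?_
  refine ContinuousLinearMap.ext fun v => ?_
  refine Prod.ext ?_ ?_ <;>
    simp [Mchar, gradCLM, smul_eq_mul] <;> ring

/-- **Laplacian of the eikonal solution along the central ray.**
Let `α` be `C²` with `|α| < 1` and `α(0) = 0`, let `K > 0`, and suppose `F = Fchar α`
restricted to an open set `V ⊇ {0} × [0, K]` is a `C²` diffeomorphism onto an open set
`U` (with `C²` inverse `G`). Let `m' = α` and define `Ψ` on `U` by
`Ψ(F(y₁, y₂)) = m(y₁) + y₂`. Then `1 + x₂ α'(0) > 0` for `x₂ ∈ [0, K]`, and the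
two-dimensional Laplacian satisfies `ΔΨ(0, x₂) = α'(0) / (1 + x₂ α'(0))` there. -/
theorem laplacian_eikonal_on_axis
    (α : ℝ → ℝ) (hα : ContDiff ℝ 2 α) (hα1 : ∀ s, |α s| < 1) (hα0 : α 0 = 0)
    (K : ℝ) (hK : 0 < K)
    (V U : Set (ℝ × ℝ)) (hV : IsOpen V) (hU : IsOpen U)
    (hseg : ({(0 : ℝ)} : Set ℝ) ×ˢ Icc (0 : ℝ) K ⊆ V)
    (hFV : Fchar α '' V = U) (hFinj : InjOn (Fchar α) V)
    (G : ℝ × ℝ → ℝ × ℝ) (hG : ContDiffOn ℝ 2 G U)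
    (hGF : ∀ y ∈ V, G (Fchar α y) = y)
    (m : ℝ → ℝ) (hm : ∀ s, HasDerivAt m (α s) s)
    (Ψ : ℝ × ℝ → ℝ) (hΨ : ∀ y ∈ V, Ψ (Fchar α y) = m y.1 + y.2) :
    (∀ x₂ ∈ Icc (0 : ℝ) K, 0 < 1 + x₂ * deriv α 0)
    ∧ (∀ x₂ ∈ Icc (0 : ℝ) K, lap2 Ψ (0, x₂) = deriv α 0 / (1 + x₂ * deriv α 0)) := by
  -- basic derivative facts
  have hαd : ∀ s, HasDerivAt α (deriv α s) s := fun s =>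
    ((hα.differentiable (by norm_num)) s).hasDerivAt
  have hpos : ∀ s, 0 < 1 - α s ^ 2 := by
    intro s
    nlinarith [hα1 s, sq_abs (α s), abs_nonneg (α s)]
  have hβpos : ∀ s, 0 < betaF α s := fun s => Real.sqrt_pos.mpr (hpos s)
  have hβsq : ∀ s, betaF α s ^ 2 = 1 - α s ^ 2 := fun s => Real.sq_sqrt (hpos s).le
  have hβd : ∀ s, HasDerivAt (betaF α) (betaD α s) s := by
    intro s
    have h1 : HasDerivAt (fun s => 1 - α s ^ 2) (-(2 * α s * deriv α s)) s := by
      have := ((hαd s).pow 2).const_sub 1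
      refine this.congr_deriv ?_
      push_cast
      ring
    have := h1.sqrt (ne_of_gt (hpos s))
    exact this
  have hβd0 : betaD α 0 = 0 := by simp [betaD, hα0]
  have hβ0 : betaF α 0 = 1 := by simp [betaF, hα0]
  have hMF : ∀ y, HasFDerivAt (Fchar α) (Mchar α y) y := fun y =>
    hasFDerivAt_Fchar_s6 α y (hαd y.1) (hβd y.1)
  -- membership facts
  have hF0 : ∀ t : ℝ, Fchar α (0, t) = (0, t) := by
    intro t; simp [Fchar, hα0]
  have hmemV : ∀ t ∈ Icc (0:ℝ) K, ((0:ℝ), t) ∈ V := by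
    intro t ht; exact hseg (mem_prod.mpr ⟨rfl, ht⟩)
  have hmemU : ∀ t ∈ Icc (0:ℝ) K, ((0:ℝ), t) ∈ U := by
    intro t ht
    rw [← hFV]
    exact ⟨(0, t), hmemV t ht, hF0 t⟩
  -- derivatives of G
  have hGd : ∀ x ∈ U, HasFDerivAt G (fderiv ℝ G x) x := by
    intro x hx
    exact ((hG.contDiffAt (hU.mem_nhds hx)).differentiableAt (by norm_num)).hasFDerivAt
  have hGid : ∀ y ∈ V, (fderiv ℝ G (Fchar α y)).comp (Mchar α y)
      = ContinuousLinearMap.id ℝ (ℝ × ℝ) := by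
    intro y hy
    have hxU : Fchar α y ∈ U := by rw [← hFV]; exact ⟨y, hy, rfl⟩
    have hcomp : HasFDerivAt (G ∘ Fchar α) ((fderiv ℝ G (Fchar α y)).comp (Mchar α y)) y :=
      (hGd _ hxU).comp y (hMF y)
    have heq : (fun z => z) =ᶠ[nhds y] G ∘ Fchar α := by
      filter_upwards [hV.mem_nhds hy] with z hz
      exact (hGF z hz).symm
    exact (hcomp.congr_of_eventuallyEq heq).unique (hasFDerivAt_id y)
  have hMinj : ∀ y ∈ V, Function.Injective (Mchar α y) := by
    intro y hy u v huv
    have h2 : (fderiv ℝ G (Fchar α y)).comp (Mchar α y) u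
        = (fderiv ℝ G (Fchar α y)).comp (Mchar α y) v := by
      simp only [ContinuousLinearMap.comp_apply, huv]
    simpa [hGid y hy] using h2
  have hMsurj : ∀ y ∈ V, Function.Surjective (Mchar α y) := by
    intro y hy
    exact LinearMap.injective_iff_surjective.mp (hMinj y hy)
  -- the key algebraic identity: gradient candidate composed with DF
  have hkey : ∀ (y v : ℝ × ℝ),
      gradCLM (α y.1) (betaF α y.1) (Mchar α y v) = α y.1 * v.1 + v.2 := by
    intro y v
    have hbne : betaF α y.1 ≠ 0 := (hβpos y.1).ne'
    have hbb : betaF α y.1 * betaD α y.1 = -(α y.1 * deriv α y.1) := by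
      rw [betaD]; field_simp
    have hb2 := hβsq y.1
    simp only [Mchar_apply, gradCLM_apply]
    linear_combination v.2 * hb2 + y.2 * v.1 * hbb
  -- the gradient formula on U
  have hgrad : ∀ y ∈ V, fderiv ℝ Ψ (Fchar α y) = gradCLM (α y.1) (betaF α y.1) := by
    intro y hy
    have hxU : Fchar α y ∈ U := by rw [← hFV]; exact ⟨y, hy, rfl⟩
    have hGF' : HasFDerivAt G (fderiv ℝ G (Fchar α y)) (Fchar α y) := hGd _ hxU
    set DG := fderiv ℝ G (Fchar α y) with hDG
    have hG1 : HasFDerivAt (fun x => (G x).1)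
        ((ContinuousLinearMap.fst ℝ ℝ ℝ).comp DG) (Fchar α y) :=
      hasFDerivAt_fst.comp _ hGF'
    have hG2 : HasFDerivAt (fun x => (G x).2)
        ((ContinuousLinearMap.snd ℝ ℝ ℝ).comp DG) (Fchar α y) :=
      hasFDerivAt_snd.comp _ hGF'
    have hm1 : HasFDerivAt (fun x => m (G x).1)
        ((α ((G (Fchar α y)).1)) • ((ContinuousLinearMap.fst ℝ ℝ ℝ).comp DG)) (Fchar α y) :=
      (hm _).comp_hasFDerivAt _ hG1
    have hΦ := hm1.add hG2
    set P := (α ((G (Fchar α y)).1)) • ((ContinuousLinearMap.fst ℝ ℝ ℝ).comp DG)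
      + (ContinuousLinearMap.snd ℝ ℝ ℝ).comp DG with hP
    have hΨΦ : Ψ =ᶠ[nhds (Fchar α y)] (fun x => m (G x).1 + (G x).2) := by
      filter_upwards [hU.mem_nhds hxU] with x hx
      rw [← hFV] at hx
      obtain ⟨z, hz, rfl⟩ := hx
      rw [hΨ z hz, hGF z hz]
    have hΨd : HasFDerivAt Ψ P (Fchar α y) := hΦ.congr_of_eventuallyEq hΨΦ
    have hchain : HasFDerivAt (Ψ ∘ Fchar α) (P.comp (Mchar α y)) y := hΨd.comp y (hMF y)
    have hRHS : HasFDerivAt (fun z : ℝ × ℝ => m z.1 + z.2) (gradCLM (α y.1) 1) y := by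
      have h1 : HasFDerivAt (fun z : ℝ × ℝ => m z.1)
          ((α y.1) • ContinuousLinearMap.fst ℝ ℝ ℝ) y :=
        (hm y.1).comp_hasFDerivAt y hasFDerivAt_fst
      have h2 := h1.add (hasFDerivAt_snd (p := y))
      refine h2.congr_fderiv ?_
      refine ContinuousLinearMap.ext fun v => ?_
      simp [gradCLM, smul_eq_mul]
    have heq2 : (fun z : ℝ × ℝ => m z.1 + z.2) =ᶠ[nhds y] (Ψ ∘ Fchar α) := by
      filter_upwards [hV.mem_nhds hy] with z hz
      exact (hΨ z hz).symm
    have hPQ : P.comp (Mchar α y) = gradCLM (α y.1) 1 :=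
      (hchain.congr_of_eventuallyEq heq2).unique hRHS
    have hPeq : P = gradCLM (α y.1) (betaF α y.1) := by
      refine ContinuousLinearMap.ext fun w => ?_
      obtain ⟨v, rfl⟩ := hMsurj y hy w
      have h1 : P (Mchar α y v) = gradCLM (α y.1) 1 v := by
        rw [← ContinuousLinearMap.comp_apply, hPQ]
      rw [h1, hkey y v, gradCLM_apply]
      ring
    rw [hΨd.fderiv, hPeq]
  -- G fixes the axis
  have hGx : ∀ t ∈ Icc (0:ℝ) K, G (0, t) = ((0:ℝ), t) := by
    intro t ht
    have := hGF (0, t) (hmemV t ht)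
    rwa [hF0 t] at this
  -- nonvanishing of 1 + t α'(0)
  have hne : ∀ t ∈ Icc (0:ℝ) K, (1 + t * deriv α 0) ≠ 0 := by
    intro t ht h0
    have hinj := hMinj (0, t) (hmemV t ht)
    have hMv : Mchar α (0, t) ((1:ℝ), (0:ℝ)) = Mchar α (0, t) (0, 0) := by
      refine Prod.ext ?_ ?_ <;> simp [Mchar_apply, hα0, hβd0, h0]
    have := hinj hMv
    simpa using this
  -- positivity
  have hpos1 : ∀ t ∈ Icc (0:ℝ) K, 0 < 1 + t * deriv α 0 := by
    intro t ht
    by_contra hle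
    push_neg at hle
    have hlt : 1 + t * deriv α 0 < 0 := lt_of_le_of_ne hle (hne t ht)
    have hcont : ContinuousOn (fun s : ℝ => 1 + s * deriv α 0) (Icc 0 t) :=
      (Continuous.continuousOn (by continuity))
    have h0t : (0:ℝ) ≤ t := ht.1
    have hsub := intermediate_value_Icc' h0t hcont
    have h0mem : (0:ℝ) ∈ Icc (1 + t * deriv α 0) (1 + 0 * deriv α 0) := by
      constructor <;> nlinarith
    obtain ⟨s, hs, hfs⟩ := hsub h0mem
    exact hne s ⟨hs.1, hs.2.trans ht.2⟩ hfs
  refine ⟨hpos1, ?_⟩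
  -- the Laplacian computation
  intro t ht
  have hxU := hmemU t ht
  have hyV := hmemV t ht
  have hGx' := hGx t ht
  set d := 1 + t * deriv α 0 with hd
  have hdne : d ≠ 0 := hne t ht
  have hGid' : (fderiv ℝ G ((0:ℝ), t)).comp (Mchar α (0, t))
      = ContinuousLinearMap.id ℝ (ℝ × ℝ) := by
    have := hGid (0, t) hyV
    rwa [hF0 t] at this
  set DG := fderiv ℝ G ((0:ℝ), t) with hDGdef
  have hMc : Mchar α (0, t) (d⁻¹, 0) = (1, 0) := by
    refine Prod.ext ?_ ?_ <;> simp [Mchar_apply, hα0, hβd0, ← hd]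
    field_simp
  have hDG1 : DG (1, 0) = (d⁻¹, (0:ℝ)) := by
    rw [← hMc, ← ContinuousLinearMap.comp_apply, hGid']
    simp
  have hGF' : HasFDerivAt G DG ((0:ℝ), t) := hGd _ hxU
  have hG1 : HasFDerivAt (fun x => (G x).1)
      ((ContinuousLinearMap.fst ℝ ℝ ℝ).comp DG) ((0:ℝ), t) :=
    hasFDerivAt_fst.comp _ hGF'
  have hev1 : (fun x => fderiv ℝ Ψ x (1, 0)) =ᶠ[nhds ((0:ℝ), t)] (fun x => α ((G x).1)) := by
    filter_upwards [hU.mem_nhds hxU] with x hx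
    rw [← hFV] at hx
    obtain ⟨z, hz, rfl⟩ := hx
    rw [hgrad z hz, hGF z hz]
    simp
  have hev2 : (fun x => fderiv ℝ Ψ x (0, 1)) =ᶠ[nhds ((0:ℝ), t)] (fun x => betaF α ((G x).1)) := by
    filter_upwards [hU.mem_nhds hxU] with x hx
    rw [← hFV] at hx
    obtain ⟨z, hz, rfl⟩ := hx
    rw [hgrad z hz, hGF z hz]
    simp
  have hd1 : HasFDerivAt (fun x => α ((G x).1))
      ((deriv α ((G ((0:ℝ), t)).1)) • ((ContinuousLinearMap.fst ℝ ℝ ℝ).comp DG)) ((0:ℝ), t) :=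
    (hαd _).comp_hasFDerivAt _ hG1
  have hd2 : HasFDerivAt (fun x => betaF α ((G x).1))
      ((betaD α ((G ((0:ℝ), t)).1)) • ((ContinuousLinearMap.fst ℝ ℝ ℝ).comp DG)) ((0:ℝ), t) :=
    (hβd _).comp_hasFDerivAt _ hG1
  have ht1 : fderiv ℝ (fun x => fderiv ℝ Ψ x (1, 0)) ((0:ℝ), t) ((1:ℝ), (0:ℝ))
      = deriv α 0 * d⁻¹ := by
    rw [hev1.fderiv_eq, hd1.fderiv]
    simp [hGx', hDG1]
  have ht2 : fderiv ℝ (fun x => fderiv ℝ Ψ x (0, 1)) ((0:ℝ), t) ((0:ℝ), (1:ℝ)) = 0 := by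
    rw [hev2.fderiv_eq, hd2.fderiv]
    simp [hGx', hβd0]
  show fderiv ℝ (fun y => fderiv ℝ Ψ y (1, 0)) (0, t) (1, 0)
    + fderiv ℝ (fun y => fderiv ℝ Ψ y (0, 1)) (0, t) (0, 1) = deriv α 0 / d
  rw [ht1, ht2, div_eq_mul_inv]
  ring
end

section
/- Let V ⊂ ℝ² be open and suppose the restriction of F to V is a C¹ diffeomorphism onto an open set U ⊂ ℝ². Let m : ℝ → ℝ satisfy m' = α and define Ψ : U → ℝ by Ψ(F(y₁, y₂)) = m(y₁) + y₂. Let r : ℝ → ℝ be of class C¹ and define a : U → ℝ by a(F(y₁, y₂)) = r(y₁). Then ⟨∇Ψ(x), ∇a(x)⟩ = 0 for every x ∈ U, i.e. any C¹ function that is constant along the characteristic curves t ↦ F(y₁, t) is annihilated by the directional derivative along ∇Ψ. -/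
open Set

/-- Applying a continuous linear map `ℝ × ℝ →L[ℝ] E` to a pair. -/
lemma clm_apply_pair {E : Type*} [NormedAddCommGroup E] [NormedSpace ℝ E]
    (T : ℝ × ℝ →L[ℝ] E) (u v : ℝ) :
    T (u, v) = u • T (1, 0) + v • T (0, 1) := by
  have h : ((u, v) : ℝ × ℝ) = u • ((1, 0) : ℝ × ℝ) + v • ((0, 1) : ℝ × ℝ) := by
    simp [Prod.ext_iff]
  rw [h, map_add, map_smul, map_smul]

/-- **Functions constant along characteristics are annihilated by `∇Ψ`.**
If `F = Fchar α` restricted to an open set `V` is a `C¹` diffeomorphism onto an open set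
`U` (with `C¹` inverse `G`), `m' = α`, `Ψ` is defined on `U` by `Ψ(F(y₁, y₂)) = m(y₁) + y₂`,
`r` is `C¹`, and `a` is defined on `U` by `a(F(y₁, y₂)) = r(y₁)` (so `a` is constant along
the characteristic curves `t ↦ F(y₁, t)`), then `⟨∇Ψ(x), ∇a(x)⟩ = 0` for every `x ∈ U`. -/
theorem transport_orthogonality
    (α : ℝ → ℝ) (hα : ContDiff ℝ 1 α) (hα1 : ∀ s, |α s| < 1)
    (V U : Set (ℝ × ℝ)) (hV : IsOpen V) (hU : IsOpen U)
    (hFV : Fchar α '' V = U) (hFinj : InjOn (Fchar α) V)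
    (G : ℝ × ℝ → ℝ × ℝ) (hG : ContDiffOn ℝ 1 G U)
    (hGF : ∀ y ∈ V, G (Fchar α y) = y)
    (m : ℝ → ℝ) (hm : ∀ s, HasDerivAt m (α s) s)
    (Ψ : ℝ × ℝ → ℝ) (hΨ : ∀ y ∈ V, Ψ (Fchar α y) = m y.1 + y.2)
    (r : ℝ → ℝ) (hr : ContDiff ℝ 1 r)
    (a : ℝ × ℝ → ℝ) (ha : ∀ y ∈ V, a (Fchar α y) = r y.1) :
    ∀ x ∈ U,
      fderiv ℝ Ψ x (1, 0) * fderiv ℝ a x (1, 0)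
        + fderiv ℝ Ψ x (0, 1) * fderiv ℝ a x (0, 1) = 0 := by
  intro x hx
  have hx' : x ∈ Fchar α '' V := hFV ▸ hx
  obtain ⟨y, hyV, hyx⟩ := hx'
  -- basic facts about α and β
  have hαd : ∀ s, HasDerivAt α (deriv α s) s := fun s =>
    (hα.differentiable one_ne_zero s).hasDerivAt
  have hpos : ∀ s, 0 < 1 - α s ^ 2 := by
    intro s
    nlinarith [hα1 s, abs_nonneg (α s), sq_abs (α s)]
  have hβd : ∀ s, HasDerivAt (fun t => Real.sqrt (1 - α t ^ 2))
      ((0 - (2 * α s ^ 1 * deriv α s)) / (2 * Real.sqrt (1 - α s ^ 2))) s := by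
    intro s
    exact ((hasDerivAt_const s (1:ℝ)).sub ((hαd s).pow 2)).sqrt (ne_of_gt (hpos s))
  set a1 : ℝ := α y.1 with ha1
  set b1 : ℝ := Real.sqrt (1 - α y.1 ^ 2) with hb1
  have hb1pos : 0 < b1 := Real.sqrt_pos.mpr (hpos y.1)
  have hb2 : a1 ^ 2 + b1 ^ 2 = 1 := by
    rw [hb1, Real.sq_sqrt (le_of_lt (hpos y.1))]; ring
  set E : ℝ := (0 - (2 * α y.1 ^ 1 * deriv α y.1)) / (2 * Real.sqrt (1 - α y.1 ^ 2)) with hE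
  have hbE : b1 * E = -(a1 * deriv α y.1) := by
    rw [hE, ← hb1, ← ha1]
    field_simp [hb1pos.ne']
    ring
  set c : ℝ := 1 + y.2 * deriv α y.1 with hc
  set d : ℝ := y.2 * E with hd
  have key : a1 * c + b1 * d = a1 := by
    rw [hc, hd]; linear_combination y.2 * hbE
  -- curves
  set γ : ℝ → ℝ × ℝ := fun t => Fchar α (y.1, t) with hγ
  set δ : ℝ → ℝ × ℝ := fun s => Fchar α (s, y.2) with hδ
  have hγd : HasDerivAt γ (a1, b1) y.2 := by
    have h1 : HasDerivAt (fun t : ℝ => y.1 + t * α y.1) a1 y.2 :=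
      ((hasDerivAt_id y.2).mul_const (α y.1)).const_add y.1 |>.congr_deriv (by ring)
    have h2 : HasDerivAt (fun t : ℝ => t * Real.sqrt (1 - α y.1 ^ 2)) b1 y.2 :=
      ((hasDerivAt_id y.2).mul_const _).congr_deriv (by ring)
    exact h1.prodMk h2
  have hδd : HasDerivAt δ (c, d) y.1 := by
    have h1 : HasDerivAt (fun s : ℝ => s + y.2 * α s) c y.1 :=
      (hasDerivAt_id y.1).add ((hαd y.1).const_mul y.2)
    have h2 : HasDerivAt (fun s : ℝ => y.2 * Real.sqrt (1 - α s ^ 2)) d y.1 :=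
      (hβd y.1).const_mul y.2
    exact h1.prodMk h2
  -- eventual membership
  have hγV : ∀ᶠ t in nhds y.2, (y.1, t) ∈ V := by
    have hcont : ContinuousAt (fun t : ℝ => ((y.1, t) : ℝ × ℝ)) y.2 :=
      (continuous_const.prodMk continuous_id).continuousAt
    exact hcont.preimage_mem_nhds (hV.mem_nhds hyV)
  have hδV : ∀ᶠ s in nhds y.1, (s, y.2) ∈ V := by
    have hcont : ContinuousAt (fun s : ℝ => ((s, y.2) : ℝ × ℝ)) y.1 :=
      (continuous_id.prodMk continuous_const).continuousAt
    exact hcont.preimage_mem_nhds (hV.mem_nhds hyV)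
  -- differentiability of G, Ψ, a at x
  have hGdiff : DifferentiableAt ℝ G x :=
    ((hG.differentiableOn one_ne_zero) x hx).differentiableAt (hU.mem_nhds hx)
  have hΨeq : Ψ =ᶠ[nhds x] fun x' => m (G x').1 + (G x').2 := by
    filter_upwards [hU.mem_nhds hx] with z hz
    obtain ⟨w, hwV, hwz⟩ := (hFV ▸ hz : z ∈ Fchar α '' V)
    rw [← hwz, hGF w hwV, hΨ w hwV]
  have haeq : a =ᶠ[nhds x] fun x' => r (G x').1 := by
    filter_upwards [hU.mem_nhds hx] with z hz
    obtain ⟨w, hwV, hwz⟩ := (hFV ▸ hz : z ∈ Fchar α '' V)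
    rw [← hwz, hGF w hwV, ha w hwV]
  have hΨgdiff : DifferentiableAt ℝ (fun x' => m (G x').1 + (G x').2) x := by
    have h1 : DifferentiableAt ℝ (fun x' => m (G x').1) x :=
      ((hm (G x).1).differentiableAt).comp x hGdiff.fst
    exact h1.add hGdiff.snd
  have hagdiff : DifferentiableAt ℝ (fun x' => r (G x').1) x :=
    ((hr.differentiable one_ne_zero) (G x).1).comp x hGdiff.fst
  have hΨdiff : DifferentiableAt ℝ Ψ x := hΨgdiff.congr_of_eventuallyEq hΨeq
  have hadiff : DifferentiableAt ℝ a x := hagdiff.congr_of_eventuallyEq haeq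
  set P := fderiv ℝ Ψ x with hP
  set A := fderiv ℝ a x with hA
  set M := fderiv ℝ G x with hM
  have hPfd : HasFDerivAt Ψ P x := hΨdiff.hasFDerivAt
  have hAfd : HasFDerivAt a A x := hadiff.hasFDerivAt
  have hMfd : HasFDerivAt G M x := hGdiff.hasFDerivAt
  have hxγ : γ y.2 = x := by rw [hγ]; simpa using hyx
  have hxδ : δ y.1 = x := by rw [hδ]; simpa using hyx
  have hPγ : HasFDerivAt Ψ P (γ y.2) := by rw [hxγ]; exact hPfd
  have hAγ : HasFDerivAt a A (γ y.2) := by rw [hxγ]; exact hAfd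
  have hMγ : HasFDerivAt G M (γ y.2) := by rw [hxγ]; exact hMfd
  have hPδ : HasFDerivAt Ψ P (δ y.1) := by rw [hxδ]; exact hPfd
  have hAδ : HasFDerivAt a A (δ y.1) := by rw [hxδ]; exact hAfd
  have hMδ : HasFDerivAt G M (δ y.1) := by rw [hxδ]; exact hMfd
  -- derivatives along the curves
  have eP1 : P (a1, b1) = 1 := by
    have h1 : HasDerivAt (Ψ ∘ γ) (P (a1, b1)) y.2 := hPγ.comp_hasDerivAt y.2 hγd
    have h2 : HasDerivAt (Ψ ∘ γ) 1 y.2 := by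
      have hc2 : HasDerivAt (fun t : ℝ => m y.1 + t) 1 y.2 :=
        (hasDerivAt_id y.2).const_add (m y.1)
      refine hc2.congr_of_eventuallyEq ?_
      filter_upwards [hγV] with t ht
      exact hΨ (y.1, t) ht
    exact h1.unique h2
  have eA1 : A (a1, b1) = 0 := by
    have h1 : HasDerivAt (a ∘ γ) (A (a1, b1)) y.2 := hAγ.comp_hasDerivAt y.2 hγd
    have h2 : HasDerivAt (a ∘ γ) 0 y.2 := by
      refine (hasDerivAt_const y.2 (r y.1)).congr_of_eventuallyEq ?_
      filter_upwards [hγV] with t ht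
      exact ha (y.1, t) ht
    exact h1.unique h2
  have eG1 : M (a1, b1) = ((0 : ℝ), (1 : ℝ)) := by
    have h1 : HasDerivAt (G ∘ γ) (M (a1, b1)) y.2 := hMγ.comp_hasDerivAt y.2 hγd
    have h2 : HasDerivAt (G ∘ γ) ((0 : ℝ), (1 : ℝ)) y.2 := by
      have hc2 : HasDerivAt (fun t : ℝ => ((y.1, t) : ℝ × ℝ)) ((0 : ℝ), (1 : ℝ)) y.2 :=
        (hasDerivAt_const y.2 y.1).prodMk (hasDerivAt_id y.2)
      refine hc2.congr_of_eventuallyEq ?_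
      filter_upwards [hγV] with t ht
      exact hGF (y.1, t) ht
    exact h1.unique h2
  have eP2 : P (c, d) = a1 := by
    have h1 : HasDerivAt (Ψ ∘ δ) (P (c, d)) y.1 := hPδ.comp_hasDerivAt y.1 hδd
    have h2 : HasDerivAt (Ψ ∘ δ) a1 y.1 := by
      have hc2 : HasDerivAt (fun s : ℝ => m s + y.2) a1 y.1 := (hm y.1).add_const y.2
      refine hc2.congr_of_eventuallyEq ?_
      filter_upwards [hδV] with s hs
      exact hΨ (s, y.2) hs
    exact h1.unique h2
  have eA2 : A (c, d) = deriv r y.1 := by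
    have h1 : HasDerivAt (a ∘ δ) (A (c, d)) y.1 := hAδ.comp_hasDerivAt y.1 hδd
    have h2 : HasDerivAt (a ∘ δ) (deriv r y.1) y.1 := by
      have hc2 : HasDerivAt r (deriv r y.1) y.1 := ((hr.differentiable one_ne_zero) y.1).hasDerivAt
      refine hc2.congr_of_eventuallyEq ?_
      filter_upwards [hδV] with s hs
      exact ha (s, y.2) hs
    exact h1.unique h2
  have eG2 : M (c, d) = ((1 : ℝ), (0 : ℝ)) := by
    have h1 : HasDerivAt (G ∘ δ) (M (c, d)) y.1 := hMδ.comp_hasDerivAt y.1 hδd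
    have h2 : HasDerivAt (G ∘ δ) ((1 : ℝ), (0 : ℝ)) y.1 := by
      have hc2 : HasDerivAt (fun s : ℝ => ((s, y.2) : ℝ × ℝ)) ((1 : ℝ), (0 : ℝ)) y.1 :=
        (hasDerivAt_id y.1).prodMk (hasDerivAt_const y.1 y.2)
      refine hc2.congr_of_eventuallyEq ?_
      filter_upwards [hδV] with s hs
      exact hGF (s, y.2) hs
    exact h1.unique h2
  -- scalar form of the equations
  set P₁ := P (1, 0) with hP1
  set P₂ := P (0, 1) with hP2
  set A₁ := A (1, 0) with hA1
  set A₂ := A (0, 1) with hA2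
  have e1 : a1 * P₁ + b1 * P₂ = 1 := by
    have := clm_apply_pair P a1 b1
    rw [eP1] at this
    simpa [smul_eq_mul] using this.symm
  have e2 : c * P₁ + d * P₂ = a1 := by
    have := clm_apply_pair P c d
    rw [eP2] at this
    simpa [smul_eq_mul] using this.symm
  have f1 : a1 * A₁ + b1 * A₂ = 0 := by
    have := clm_apply_pair A a1 b1
    rw [eA1] at this
    simpa [smul_eq_mul] using this.symm
  -- invertibility: b1*c - a1*d ≠ 0
  have hD : b1 * c - a1 * d ≠ 0 := by
    intro hD0
    have hceq : c = a1 ^ 2 := by linear_combination a1 * key + b1 * hD0 - c * hb2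
    have hdeq : d = a1 * b1 := by linear_combination b1 * key - a1 * hD0 - d * hb2
    have hcd : ((c, d) : ℝ × ℝ) = a1 • ((a1, b1) : ℝ × ℝ) := by
      simp [Prod.ext_iff, hceq, hdeq, smul_eq_mul]
      ring
    rw [hcd, map_smul, eG1] at eG2
    have h0 : (1 : ℝ) = a1 * 0 := (congrArg Prod.fst eG2).symm
    simp at h0
  -- Q = 0
  have hQ : b1 * P₁ - a1 * P₂ = 0 := by
    have hDQ : (b1 * c - a1 * d) * (b1 * P₁ - a1 * P₂) = 0 := by
      linear_combination e2 + (c * P₁ + d * P₂) * hb2 - (a1 * c + b1 * d) * e1 - key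
    exact (mul_eq_zero.mp hDQ).resolve_left hD
  -- conclude
  show P₁ * A₁ + P₂ * A₂ = 0
  linear_combination (a1 * P₁ + b1 * P₂) * f1 + (b1 * A₁ - a1 * A₂) * hQ
    - (P₁ * A₁ + P₂ * A₂) * hb2
end

section
/- Let K > 0, let α : ℝ → ℝ be of class C² with |α(s)| < 1 for all s, α(0) = 0, and 1 + α'(0) x₂ > 0 for all x₂ ∈ [0, K]; set β = √(1 − α²). Then for every continuous function g : ℝ² → ℂ, lim_{h → 0⁺} (1/(2h)) ∫₀^K ( ∫_{−h + (α(−h)/β(−h)) x₂}^{h + (α(h)/β(h)) x₂} g(x₁, x₂) dx₁ ) dx₂ = ∫₀^K (1 + α'(0) x₂) · g(0, x₂) dx₂. -/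
open Set MeasureTheory intervalIntegral Filter Asymptotics

private lemma strip_pointwise_limit (a : ℝ → ℝ) (d : ℝ) (ha0 : a 0 = 0) (hac : Continuous a)
    (t1 : Tendsto (fun h => a h / h) (nhdsWithin 0 (Ioi 0)) (nhds d))
    (t2 : Tendsto (fun h => a (-h) / (-h)) (nhdsWithin 0 (Ioi 0)) (nhds d))
    (g : ℝ × ℝ → ℂ) (hg : Continuous g) (x₂ : ℝ) :
    Tendsto (fun h : ℝ => ((1 / (2 * h) : ℝ) : ℂ) *
        ∫ x₁ in (-h + a (-h) * x₂)..(h + a h * x₂), g (x₁, x₂))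
      (nhdsWithin 0 (Ioi 0))
      (nhds (((1 + d * x₂ : ℝ) : ℂ) * g (0, x₂))) := by
  set c : ℂ := g (0, x₂) with hc
  set G : ℝ → ℂ := fun u => ∫ s in (0:ℝ)..u, g (s, x₂) with hG_def
  have hgc : Continuous fun s : ℝ => g (s, x₂) := hg.comp (continuous_id.prodMk continuous_const)
  have hGd : HasStrictDerivAt G c 0 := by
    apply integral_hasStrictDerivAt_right (hgc.intervalIntegrable _ _)
      (hgc.stronglyMeasurableAtFilter _ _) hgc.continuousAt
  set R : ℝ → ℝ := fun h => h + a h * x₂ with hR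
  set L : ℝ → ℝ := fun h => -h + a (-h) * x₂ with hL
  have hslope : Tendsto (fun h => (R h - L h) / (2 * h)) (nhdsWithin 0 (Ioi 0))
      (nhds (1 + d * x₂)) := by
    have hsum : Tendsto (fun h => 1 + ((a h / h + a (-h) / (-h)) / 2) * x₂)
        (nhdsWithin 0 (Ioi 0)) (nhds (1 + ((d + d) / 2) * x₂)) :=
      tendsto_const_nhds.add ((((t1.add t2).div_const 2).mul_const x₂))
    have : ((d + d) / 2) = d := by ring
    rw [this] at hsum
    refine hsum.congr' ?_
    filter_upwards [self_mem_nhdsWithin] with h hh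
    have hne : h ≠ 0 := ne_of_gt hh
    simp only [hR, hL]
    rw [div_neg]
    field_simp
    ring
  have hR0 : Tendsto R (nhdsWithin 0 (Ioi 0)) (nhds 0) := by
    have hcont : Continuous R := continuous_id.add ((hac.mul continuous_const))
    have h' : Tendsto R (nhdsWithin (0:ℝ) (Ioi 0)) (nhds (R 0)) :=
      (hcont.tendsto 0).mono_left nhdsWithin_le_nhds
    simpa [hR, ha0] using h'
  have hL0 : Tendsto L (nhdsWithin 0 (Ioi 0)) (nhds 0) := by
    have hcont : Continuous L := continuous_neg.add (((hac.comp continuous_neg).mul continuous_const))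
    have h' : Tendsto L (nhdsWithin (0:ℝ) (Ioi 0)) (nhds (L 0)) :=
      (hcont.tendsto 0).mono_left nhdsWithin_le_nhds
    simpa [hL, ha0] using h'
  have hRL : Tendsto (fun h => (R h, L h)) (nhdsWithin 0 (Ioi 0)) (nhds (0, 0)) :=
    hR0.prodMk_nhds hL0
  have o1 : (fun h => G (R h) - G (L h) - (R h - L h) • c) =o[nhdsWithin 0 (Ioi 0)]
      (fun h => R h - L h) := by
    have := hGd.isLittleO.comp_tendsto hRL
    simpa [Function.comp_def] using this
  have hRLO : (fun h => R h - L h) =O[nhdsWithin 0 (Ioi 0)] (fun h => h) := by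
    rw [isBigO_iff]
    refine ⟨2 * (|1 + d * x₂| + 1), ?_⟩
    have hev : ∀ᶠ h in nhdsWithin 0 (Ioi 0), |(R h - L h) / (2 * h)| < |1 + d * x₂| + 1 := by
      exact hslope.abs.eventually_lt_const (by linarith [abs_nonneg (1 + d * x₂)] :
        |1 + d * x₂| < |1 + d * x₂| + 1)
    filter_upwards [hev, self_mem_nhdsWithin] with h h1 h2
    have hh : (0:ℝ) < h := h2
    have : |R h - L h| = |(R h - L h) / (2 * h)| * (2 * h) := by
      rw [abs_div, abs_of_pos (by linarith : (0:ℝ) < 2 * h)]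
      field_simp
    rw [Real.norm_eq_abs, Real.norm_eq_abs, this, abs_of_pos hh]
    nlinarith [abs_nonneg ((R h - L h) / (2 * h))]
  have o2 : (fun h => G (R h) - G (L h) - (R h - L h) • c) =o[nhdsWithin 0 (Ioi 0)]
      (fun h : ℝ => h) := o1.trans_isBigO hRLO
  have T1 : Tendsto (fun h => (1 / (2 * h) : ℝ) • (G (R h) - G (L h) - (R h - L h) • c))
      (nhdsWithin 0 (Ioi 0)) (nhds 0) := by
    have hbig : (fun h : ℝ => (1 / (2 * h) : ℝ)) =O[nhdsWithin 0 (Ioi 0)]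
        (fun h : ℝ => (1 / (2 * h) : ℝ)) := isBigO_refl _ _
    have o3 := hbig.smul_isLittleO o2
    have hb1 : (fun h : ℝ => (1 / (2 * h) : ℝ) • h) =O[nhdsWithin 0 (Ioi 0)]
        (fun _ : ℝ => (1 : ℝ)) := by
      rw [isBigO_iff]
      refine ⟨1, ?_⟩
      filter_upwards [self_mem_nhdsWithin] with h hh
      have hne : h ≠ 0 := ne_of_gt hh
      have : (1 / (2 * h) : ℝ) • h = (1/2 : ℝ) := by
        rw [smul_eq_mul]; field_simp
      rw [this]
      simp; norm_num
    have o4 : (fun h => (1 / (2 * h) : ℝ) • (G (R h) - G (L h) - (R h - L h) • c))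
        =o[nhdsWithin 0 (Ioi 0)] (fun _ : ℝ => (1 : ℝ)) := o3.trans_isBigO hb1
    exact isLittleO_one_iff ℝ |>.1 o4
  have T2 : Tendsto (fun h => ((R h - L h) / (2 * h) : ℝ) • c) (nhdsWithin 0 (Ioi 0))
      (nhds ((1 + d * x₂ : ℝ) • c)) := hslope.smul_const c
  have Tsum := T1.add T2
  rw [zero_add] at Tsum
  have hfinal : Tendsto (fun h : ℝ => ((1 / (2 * h) : ℝ) : ℂ) * (G (R h) - G (L h)))
      (nhdsWithin 0 (Ioi 0)) (nhds ((1 + d * x₂ : ℝ) • c)) := by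
    refine Tsum.congr' ?_
    filter_upwards [self_mem_nhdsWithin] with h hh
    have hne : h ≠ 0 := ne_of_gt hh
    have hne' : (h : ℂ) ≠ 0 := by exact_mod_cast hne
    simp only [Complex.real_smul]
    push_cast
    field_simp
    try ring
  have hFG : ∀ h : ℝ, (∫ x₁ in (L h)..(R h), g (x₁, x₂)) = G (R h) - G (L h) := by
    intro h
    exact (integral_interval_sub_left (hgc.intervalIntegrable _ _)
      (hgc.intervalIntegrable _ _)).symm
  have := hfinal.congr (fun h => by rw [← hFG h])
  convert this using 2
  try rw [Complex.real_smul]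

set_option maxHeartbeats 1000000 in
private theorem strip_aux (K : ℝ) (hK : 0 < K)
    (a : ℝ → ℝ) (d : ℝ) (ha0 : a 0 = 0) (hac : Continuous a) (had : HasDerivAt a d 0)
    (g : ℝ × ℝ → ℂ) (hg : Continuous g) :
    Filter.Tendsto
      (fun h : ℝ =>
        ((1 / (2 * h) : ℝ) : ℂ) *
          ∫ x₂ in (0 : ℝ)..K,
            ∫ x₁ in (-h + a (-h) * x₂)..(h + a h * x₂), g (x₁, x₂))
      (nhdsWithin 0 (Ioi 0))
      (nhds (∫ x₂ in (0 : ℝ)..K, ((1 + d * x₂ : ℝ) : ℂ) * g (0, x₂))) := by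
  -- one-sided slope limits
  have hs : Tendsto (slope a 0) (nhdsWithin 0 {(0:ℝ)}ᶜ) (nhds d) :=
    hasDerivAt_iff_tendsto_slope.1 had
  have hsub : nhdsWithin (0:ℝ) (Ioi 0) ≤ nhdsWithin 0 {(0:ℝ)}ᶜ :=
    nhdsWithin_mono _ (fun x hx => ne_of_gt hx)
  have t1 : Tendsto (fun h => a h / h) (nhdsWithin 0 (Ioi 0)) (nhds d) := by
    refine (hs.mono_left hsub).congr (fun h => ?_)
    simp [slope, ha0]
    ring
  have t2 : Tendsto (fun h => a (-h) / (-h)) (nhdsWithin 0 (Ioi 0)) (nhds d) := by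
    have hneg : Tendsto (fun h : ℝ => -h) (nhdsWithin 0 (Ioi 0)) (nhdsWithin 0 {(0:ℝ)}ᶜ) := by
      apply tendsto_nhdsWithin_of_tendsto_nhds_of_eventually_within
      · simpa using (continuous_neg.tendsto (0:ℝ)).mono_left nhdsWithin_le_nhds
      · filter_upwards [self_mem_nhdsWithin] with h hh
        simp only [mem_compl_iff, mem_singleton_iff, neg_eq_zero]
        exact ne_of_gt hh
    refine ((hs.comp hneg)).congr (fun h => ?_)
    simp [slope, ha0, Function.comp]
    ring
  -- a linear bound near 0
  set M : ℝ := |d| + 1 with hM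
  have hMpos : 0 < M := by positivity
  have hev1 : ∀ᶠ h in nhdsWithin (0:ℝ) (Ioi 0), |a h / h| < M :=
    t1.abs.eventually_lt_const (by simp [hM])
  have hev2 : ∀ᶠ h in nhdsWithin (0:ℝ) (Ioi 0), |a (-h) / (-h)| < M :=
    t2.abs.eventually_lt_const (by simp [hM])
  obtain ⟨s, hsmem, hsprop⟩ := (hev1.and hev2).exists_mem
  obtain ⟨δ, hδpos, hδsub⟩ := mem_nhdsGT_iff_exists_Ioc_subset.1 hsmem
  have hδ0 : 0 < δ := hδpos
  have habound : ∀ h ∈ Ioc (0:ℝ) δ, |a h| ≤ M * h ∧ |a (-h)| ≤ M * h := by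
    intro h hh
    have hpos' : 0 < h := hh.1
    obtain ⟨e1, e2⟩ := hsprop h (hδsub hh)
    constructor
    · have h' : |a h| / h < M := by rwa [abs_div, abs_of_pos hpos'] at e1
      have := (div_lt_iff₀ hpos').1 h'
      linarith
    · have h' : |a (-h)| / h < M := by
        rwa [abs_div, abs_neg, abs_of_pos hpos'] at e2
      have := (div_lt_iff₀ hpos').1 h'
      linarith
  -- global bound for g on a compact set
  set A : ℝ := δ + M * δ * K with hA
  have hApos : 0 < A := by positivity
  obtain ⟨C₀, hC₀⟩ := (((isCompact_Icc (a := -A) (b := A)).prod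
      (isCompact_Icc (a := (0:ℝ)) (b := K)))).exists_bound_of_continuousOn hg.continuousOn
  set C₁ : ℝ := max C₀ 0 with hC₁
  have hC₁0 : 0 ≤ C₁ := le_max_right _ _
  have hC₁b : ∀ p ∈ Icc (-A) A ×ˢ Icc (0:ℝ) K, ‖g p‖ ≤ C₁ :=
    fun p hp => (hC₀ p hp).trans (le_max_left _ _)
  -- continuity in x₂ of the inner integral, for fixed h
  have hFcont : ∀ h : ℝ, Continuous fun x₂ : ℝ =>
      ∫ x₁ in (-h + a (-h) * x₂)..(h + a h * x₂), g (x₁, x₂) := by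
    intro h
    have hunc : Continuous (Function.uncurry fun (x₂ : ℝ) (t : ℝ) => g (t, x₂)) := by
      apply hg.comp
      exact (continuous_snd.prodMk continuous_fst)
    have c1 : Continuous fun x₂ : ℝ => ∫ t in (0:ℝ)..(h + a h * x₂), g (t, x₂) :=
      intervalIntegral.continuous_parametric_intervalIntegral_of_continuous hunc
        (continuous_const.add (continuous_const.mul continuous_id))
    have c2 : Continuous fun x₂ : ℝ => ∫ t in (0:ℝ)..(-h + a (-h) * x₂), g (t, x₂) :=
      intervalIntegral.continuous_parametric_intervalIntegral_of_continuous hunc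
        (continuous_const.add (continuous_const.mul continuous_id))
    have := c1.sub c2
    refine this.congr fun x₂ => ?_
    have hgc : Continuous fun s : ℝ => g (s, x₂) :=
      hg.comp (continuous_id.prodMk continuous_const)
    exact integral_interval_sub_left (hgc.intervalIntegrable _ _) (hgc.intervalIntegrable _ _)
  -- rewrite goal: move the constant inside the integral
  have hrw : ∀ h : ℝ,
      ((1 / (2 * h) : ℝ) : ℂ) *
          ∫ x₂ in (0 : ℝ)..K, ∫ x₁ in (-h + a (-h) * x₂)..(h + a h * x₂), g (x₁, x₂)
        = ∫ x₂ in (0 : ℝ)..K, ((1 / (2 * h) : ℝ) : ℂ) *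
            ∫ x₁ in (-h + a (-h) * x₂)..(h + a h * x₂), g (x₁, x₂) := by
    intro h
    rw [intervalIntegral.integral_const_mul]
  rw [funext hrw]
  -- dominated convergence
  apply intervalIntegral.tendsto_integral_filter_of_dominated_convergence
    (bound := fun _ => C₁ * (1 + M * K))
  · filter_upwards with h
    exact (continuous_const.mul (hFcont h)).aestronglyMeasurable.restrict
  · have hmem : Ioc (0:ℝ) δ ∈ nhdsWithin (0:ℝ) (Ioi 0) :=
      Ioc_mem_nhdsGT_of_mem ⟨le_refl _, hδ0⟩
    filter_upwards [hmem] with h hh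
    refine Filter.Eventually.of_forall fun x₂ => ?_
    intro hx₂
    have hx₂' : x₂ ∈ Ioc (0:ℝ) K := by rwa [uIoc_of_le hK.le] at hx₂
    have hx0 : 0 ≤ x₂ := hx₂'.1.le
    have hxK : x₂ ≤ K := hx₂'.2
    have hh0 : 0 < h := hh.1
    have hhδ : h ≤ δ := hh.2
    obtain ⟨b1, b2⟩ := habound h hh
    have hmh : M * h ≤ M * δ := by nlinarith
    -- endpoints bounds
    have hRb : |h + a h * x₂| ≤ A := by
      have : |a h * x₂| ≤ M * h * K := by
        rw [abs_mul, abs_of_nonneg hx0]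
        have h1 : |a h| * x₂ ≤ (M * h) * x₂ := by nlinarith [abs_nonneg (a h)]
        nlinarith [abs_nonneg (a h)]
      calc |h + a h * x₂| ≤ |h| + |a h * x₂| := abs_add_le _ _
        _ ≤ δ + M * δ * K := by
            rw [abs_of_pos hh0]
            have : M * h * K ≤ M * δ * K := by nlinarith
            linarith
        _ = A := rfl
    have hLb : |-h + a (-h) * x₂| ≤ A := by
      have : |a (-h) * x₂| ≤ M * h * K := by
        rw [abs_mul, abs_of_nonneg hx0]
        nlinarith [abs_nonneg (a (-h))]
      calc |-h + a (-h) * x₂| ≤ |-h| + |a (-h) * x₂| := abs_add_le _ _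
        _ ≤ δ + M * δ * K := by
            rw [abs_neg, abs_of_pos hh0]
            have : M * h * K ≤ M * δ * K := by nlinarith
            linarith
        _ = A := rfl
    -- bound on inner integral
    have hint : ‖∫ x₁ in (-h + a (-h) * x₂)..(h + a h * x₂), g (x₁, x₂)‖
        ≤ C₁ * |(h + a h * x₂) - (-h + a (-h) * x₂)| := by
      apply intervalIntegral.norm_integral_le_of_norm_le_const
      intro x hx
      apply hC₁b
      constructor
      · constructor
        · have hmin : min (-h + a (-h) * x₂) (h + a h * x₂) ≤ x := le_of_lt hx.1
          have h1 : -A ≤ min (-h + a (-h) * x₂) (h + a h * x₂) := by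
            rcases le_total (-h + a (-h) * x₂) (h + a h * x₂) with hle | hle
            · rw [min_eq_left hle]; linarith [neg_abs_le (-h + a (-h) * x₂), hLb]
            · rw [min_eq_right hle]; linarith [neg_abs_le (h + a h * x₂), hRb]
          linarith
        · have hmax : x ≤ max (-h + a (-h) * x₂) (h + a h * x₂) := hx.2
          have h2 : max (-h + a (-h) * x₂) (h + a h * x₂) ≤ A := by
            rcases le_total (-h + a (-h) * x₂) (h + a h * x₂) with hle | hle
            · rw [max_eq_right hle]; linarith [le_abs_self (h + a h * x₂), hRb]
            · rw [max_eq_left hle]; linarith [le_abs_self (-h + a (-h) * x₂), hLb]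
          linarith
      · exact ⟨hx0, hxK⟩
    have hdiff : |(h + a h * x₂) - (-h + a (-h) * x₂)| ≤ 2 * h * (1 + M * K) := by
      have heq : (h + a h * x₂) - (-h + a (-h) * x₂) = 2 * h + (a h - a (-h)) * x₂ := by ring
      rw [heq]
      have h1 : |2 * h| = 2 * h := abs_of_pos (by linarith)
      have h2a : |a h - a (-h)| ≤ M * h + M * h := by
        calc |a h - a (-h)| ≤ |a h| + |a (-h)| := abs_sub _ _
          _ ≤ M * h + M * h := add_le_add b1 b2
      have h2 : |(a h - a (-h)) * x₂| ≤ (M * h + M * h) * K := by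
        rw [abs_mul, abs_of_nonneg hx0]
        have hnn : (0:ℝ) ≤ |a h - a (-h)| := abs_nonneg _
        have hMh : (0:ℝ) ≤ M * h + M * h := le_trans hnn h2a
        calc |a h - a (-h)| * x₂ ≤ (M * h + M * h) * x₂ :=
              mul_le_mul_of_nonneg_right h2a hx0
          _ ≤ (M * h + M * h) * K := mul_le_mul_of_nonneg_left hxK hMh
      calc |2 * h + (a h - a (-h)) * x₂| ≤ |2 * h| + |(a h - a (-h)) * x₂| := abs_add_le _ _
        _ ≤ 2 * h + (M * h + M * h) * K := by rw [h1]; linarith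
        _ = 2 * h * (1 + M * K) := by ring
    set I : ℂ := ∫ x₁ in (-h + a (-h) * x₂)..(h + a h * x₂), g (x₁, x₂) with hI_def
    have hI : ‖I‖ ≤ C₁ * (2 * h * (1 + M * K)) :=
      hint.trans (mul_le_mul_of_nonneg_left hdiff hC₁0)
    have hnorm : ‖((1 / (2 * h) : ℝ) : ℂ) * I‖ = (1 / (2 * h)) * ‖I‖ := by
      rw [norm_mul, Complex.norm_real, Real.norm_eq_abs,
        abs_of_pos (by positivity : (0:ℝ) < 1 / (2 * h))]
    rw [hnorm]
    have hstep : (1 / (2 * h)) * ‖I‖ ≤ (1 / (2 * h)) * (C₁ * (2 * h * (1 + M * K))) :=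
      mul_le_mul_of_nonneg_left hI (by positivity)
    have hfin : (1 / (2 * h)) * (C₁ * (2 * h * (1 + M * K))) = C₁ * (1 + M * K) := by
      field_simp
    linarith
  · exact intervalIntegrable_const
  · refine Filter.Eventually.of_forall fun x₂ => ?_
    intro _
    exact strip_pointwise_limit a d ha0 hac t1 t2 g hg x₂

/-- **Averaging over the thin curvilinear strip `Π_h`.**
Let `K > 0`, let `α` be `C²` with `|α| < 1`, `α(0) = 0`, and `1 + α'(0) x₂ > 0` on
`[0, K]`, and set `β = √(1 - α²)`. For every continuous `g : ℝ² → ℂ`,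
`(1/(2h)) ∫₀^K ∫_{-h + (α(-h)/β(-h)) x₂}^{h + (α(h)/β(h)) x₂} g(x₁, x₂) dx₁ dx₂`
converges, as `h → 0⁺`, to `∫₀^K (1 + α'(0) x₂) g(0, x₂) dx₂`. -/
theorem strip_average_limit
    (K : ℝ) (hK : 0 < K)
    (α : ℝ → ℝ) (hα : ContDiff ℝ 2 α) (hα1 : ∀ s, |α s| < 1) (hα0 : α 0 = 0)
    (hpos : ∀ x₂ ∈ Icc (0 : ℝ) K, 0 < 1 + deriv α 0 * x₂)
    (g : ℝ × ℝ → ℂ) (hg : Continuous g) :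
    Filter.Tendsto
      (fun h : ℝ =>
        ((1 / (2 * h) : ℝ) : ℂ) *
          ∫ x₂ in (0 : ℝ)..K,
            ∫ x₁ in (-h + (α (-h) / Real.sqrt (1 - α (-h) ^ 2)) * x₂)..(h
                + (α h / Real.sqrt (1 - α h ^ 2)) * x₂),
              g (x₁, x₂))
      (nhdsWithin 0 (Ioi 0))
      (nhds (∫ x₂ in (0 : ℝ)..K, ((1 + deriv α 0 * x₂ : ℝ) : ℂ) * g (0, x₂))) := by
  have hsq : ∀ t, 0 < 1 - α t ^ 2 := by
    intro t
    have h := hα1 t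
    nlinarith [abs_nonneg (α t), sq_abs (α t)]
  have hαc : Continuous α := hα.continuous
  have hac : Continuous fun t => α t / Real.sqrt (1 - α t ^ 2) :=
    hαc.div ((continuous_const.sub (hαc.pow 2)).sqrt)
      (fun t => (Real.sqrt_pos.2 (hsq t)).ne')
  have ha0 : (fun t => α t / Real.sqrt (1 - α t ^ 2)) 0 = 0 := by simp [hα0]
  have had : HasDerivAt (fun t => α t / Real.sqrt (1 - α t ^ 2)) (deriv α 0) 0 := by
    have hαd : HasDerivAt α (deriv α 0) 0 := ((hα.differentiable (by norm_num)) 0).hasDerivAt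
    have h1 : HasDerivAt (fun t => 1 - α t ^ 2) 0 0 := by
      have := (hαd.pow 2).const_sub 1
      simpa [hα0] using this
    have hβd : HasDerivAt (fun t => Real.sqrt (1 - α t ^ 2)) 0 0 := by
      have h2 : HasDerivAt Real.sqrt (1 / (2 * Real.sqrt (1 - α 0 ^ 2))) (1 - α 0 ^ 2) :=
        Real.hasDerivAt_sqrt (by simp [hα0])
      have := h2.comp 0 h1
      simpa [hα0, Function.comp_def] using this
    have := hαd.div hβd (by simp [hα0])
    refine this.congr_deriv ?_
    simp [hα0]
  exact strip_aux K hK _ _ ha0 hac had g hg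
end
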